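/- arXiv:2502.00720 — 2 statements merged into one kernel-verified Lean document; each statement's English description precedes it below -/
import Mathlib

section
/- For the Stokes corner function V₀(ρ,θ) = (√2/3)·ρ^{3/2}·cos(3θ/2 + 3π/4), the squared gradient satisfies |∇V₀(x)|² = -x₂ at every point x = (ρcosθ, ρsinθ) on the two boundary rays θ = -5π/6 and θ = -π/6 with ρ > 0, where x₂ = ρ sinθ. -/
open Real

/-- The Stokes corner flow in polar coordinates:
`V₀(ρ,θ) = (√2/3) ρ^{3/2} cos(3θ/2 + 3π/4)`. -/
noncomputable def V0p (ρ θ : ℝ) : ℝ :=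
  (Real.sqrt 2 / 3) * ρ ^ ((3:ℝ)/2) * Real.cos (3*θ/2 + 3*π/4)

lemma deriv_rho (ρ θ : ℝ) (hρ : ρ ≠ 0) :
    deriv (fun r => V0p r θ) ρ
      = (Real.sqrt 2 / 3) * Real.cos (3*θ/2 + 3*π/4) * ((3/2) * ρ ^ ((1:ℝ)/2)) := by
  have h : HasDerivAt (fun r : ℝ => V0p r θ)
      ((Real.sqrt 2 / 3) * Real.cos (3*θ/2 + 3*π/4) * ((3/2) * ρ ^ ((3:ℝ)/2 - 1))) ρ := by
    have h1 : HasDerivAt (fun r : ℝ => r ^ ((3:ℝ)/2)) ((3/2) * ρ ^ ((3:ℝ)/2 - 1)) ρ :=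
      Real.hasDerivAt_rpow_const (Or.inl hρ)
    have h2 := (h1.const_mul (Real.sqrt 2 / 3)).mul_const (Real.cos (3*θ/2 + 3*π/4))
    simpa [V0p, mul_comm, mul_left_comm, mul_assoc] using h2
  rw [h.deriv]
  norm_num

lemma deriv_theta (ρ θ : ℝ) :
    deriv (fun t => V0p ρ t) θ
      = (Real.sqrt 2 / 3) * ρ ^ ((3:ℝ)/2) * (-Real.sin (3*θ/2 + 3*π/4) * (3/2)) := by
  have h1 : HasDerivAt (fun t : ℝ => 3*t/2 + 3*π/4) (3/2) θ := by
    simpa using (((hasDerivAt_id θ).const_mul (3:ℝ)).div_const 2).add_const (3*π/4)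
  have h2 := (Real.hasDerivAt_cos (3*θ/2 + 3*π/4)).comp θ h1
  have h3 := h2.const_mul ((Real.sqrt 2 / 3) * ρ ^ ((3:ℝ)/2))
  have h4 : HasDerivAt (fun t => V0p ρ t)
      ((Real.sqrt 2 / 3) * ρ ^ ((3:ℝ)/2) * (-Real.sin (3*θ/2 + 3*π/4) * (3/2))) θ := by
    simpa [V0p, Function.comp, mul_assoc] using h3
  exact h4.deriv

/-- On the two boundary rays `θ = -5π/6` and `θ = -π/6` (with `ρ > 0`) the squared gradient
`|∇V₀|² = (∂_ρ V₀)² + ρ⁻²(∂_θ V₀)²` equals `-x₂ = -ρ sin θ`. -/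
theorem stmt1 (ρ θ : ℝ) (hρ : 0 < ρ) (hθ : θ = -5*π/6 ∨ θ = -π/6) :
    (deriv (fun r => V0p r θ) ρ)^2 + (ρ^2)⁻¹ * (deriv (fun t => V0p ρ t) θ)^2
      = -(ρ * Real.sin θ) := by
  rw [deriv_rho ρ θ hρ.ne', deriv_theta ρ θ]
  have hr3 : (ρ ^ ((3:ℝ)/2)) ^ 2 = ρ ^ 3 := by
    rw [← Real.rpow_natCast (ρ ^ ((3:ℝ)/2)) 2, ← Real.rpow_mul hρ.le]
    rw [← Real.rpow_natCast ρ 3]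
    congr 1
    norm_num
  have hsq : Real.sqrt 2 ^ 2 = 2 := Real.sq_sqrt (by norm_num)
  rcases hθ with h | h <;> subst h
  · have ha : 3*(-5*π/6)/2 + 3*π/4 = -(π/2) := by ring
    rw [ha, Real.cos_neg, Real.cos_pi_div_two, Real.sin_neg, Real.sin_pi_div_two]
    have hs : Real.sin (-5*π/6) = -(1/2) := by
      have : (-5*π/6 : ℝ) = -(π - π/6) := by ring
      rw [this, Real.sin_neg, Real.sin_pi_sub, Real.sin_pi_div_six]
    rw [hs]
    field_simp
    ring_nf
    rw [hr3, hsq]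
    ring
  · have ha : 3*(-π/6)/2 + 3*π/4 = π/2 := by ring
    rw [ha, Real.cos_pi_div_two, Real.sin_pi_div_two]
    have hs : Real.sin (-π/6) = -(1/2) := by
      rw [show (-π/6 : ℝ) = -(π/6) by ring, Real.sin_neg, Real.sin_pi_div_six]
    rw [hs]
    field_simp
    ring_nf
    rw [hr3, hsq]
    ring
end

section
/- Let N ≥ 2 be an integer and let f : [0,π] → ℝ be continuous, nonnegative, with f(0) = f(π) = 0, ∫₀^π f(θ)² dθ = 1, satisfying f'' + N² f = 0 on the open set {f > 0}, and such that at every interior zero θ* of f the one-sided derivatives satisfy lim_{τ→θ*+} f'(τ) = -lim_{τ→θ*-} f'(τ). If moreover f > 0 on some subinterval, then f(θ) = |sin(Nθ)| / √(∫₀^π sin²(Nθ)dθ) for all θ ∈ [0,π]. -/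
open Real

open Set

private lemma hasDerivAt_gsol (c₁ c₂ n t₀ t : ℝ) :
    HasDerivAt (fun s => c₁ * Real.cos (n*(s-t₀)) + c₂ * Real.sin (n*(s-t₀)))
      (n * (c₂ * Real.cos (n*(t-t₀)) - c₁ * Real.sin (n*(t-t₀)))) t := by
  have h1 : HasDerivAt (fun s : ℝ => n*(s-t₀)) n t := by
    simpa using ((hasDerivAt_id t).sub_const t₀).const_mul n
  have hc := (Real.hasDerivAt_cos (n*(t-t₀))).comp t h1
  have hs := (Real.hasDerivAt_sin (n*(t-t₀))).comp t h1
  refine HasDerivAt.congr_deriv ((hc.const_mul c₁).add (hs.const_mul c₂)) ?_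
  ring

private lemma ode_shape (n : ℝ) (hn : 0 < n) (f f' : ℝ → ℝ) (a b : ℝ)
    (hf : ∀ θ ∈ Set.Ioo a b, HasDerivAt f (f' θ) θ ∧ HasDerivAt f' (-(n^2) * f θ) θ)
    (θ₀ : ℝ) (hθ₀ : θ₀ ∈ Set.Ioo a b) :
    ∀ θ ∈ Set.Ioo a b,
      f θ = f θ₀ * Real.cos (n*(θ-θ₀)) + (f' θ₀ / n) * Real.sin (n*(θ-θ₀)) ∧
      f' θ = n * ((f' θ₀ / n) * Real.cos (n*(θ-θ₀)) - f θ₀ * Real.sin (n*(θ-θ₀))) := by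
  set c₁ := f θ₀ with hc₁
  set c₂ := f' θ₀ / n with hc₂
  set g : ℝ → ℝ := fun s => c₁ * Real.cos (n*(s-θ₀)) + c₂ * Real.sin (n*(s-θ₀)) with hg
  set g' : ℝ → ℝ := fun s => n * (c₂ * Real.cos (n*(s-θ₀)) - c₁ * Real.sin (n*(s-θ₀))) with hg'
  have hgd : ∀ t, HasDerivAt g (g' t) t := fun t => hasDerivAt_gsol c₁ c₂ n θ₀ t
  have hgd' : ∀ t, HasDerivAt g' (-(n^2) * g t) t := by
    intro t
    have heq : g' = fun s => (n*c₂) * Real.cos (n*(s-θ₀)) + (-(n*c₁)) * Real.sin (n*(s-θ₀)) := by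
      funext s; simp only [hg']; ring
    rw [heq]
    have h2 := hasDerivAt_gsol (n*c₂) (-(n*c₁)) n θ₀ t
    convert h2 using 1
    simp only [hg]; ring
  set E : ℝ → ℝ := fun s => (f' s - g' s)^2 + n^2 * (f s - g s)^2 with hE
  have hEd : ∀ s ∈ Set.Ioo a b, HasDerivAt E 0 s := by
    intro s hs
    have h1 : HasDerivAt (fun u => f u - g u) (f' s - g' s) s := (hf s hs).1.sub (hgd s)
    have h2 : HasDerivAt (fun u => f' u - g' u) (-(n^2) * (f s - g s)) s := by
      have := (hf s hs).2.sub (hgd' s); exact this.congr_deriv (by ring)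
    have := ((h2.pow 2).add ((h1.pow 2).const_mul (n^2)))
    refine this.congr_deriv ?_
    ring
  have hE0 : E θ₀ = 0 := by
    simp only [hE, hg, hg']
    rw [show n*(θ₀-θ₀) = 0 by ring]
    simp only [Real.cos_zero, Real.sin_zero]
    rw [hc₂]
    field_simp
    rw [hc₁]; ring
  have hEz : ∀ θ ∈ Set.Ioo a b, E θ = 0 := by
    intro θ hθ
    rcases le_total θ₀ θ with hle | hle
    · have hsub : Set.Icc θ₀ θ ⊆ Set.Ioo a b := by
        intro x hx; exact ⟨lt_of_lt_of_le hθ₀.1 hx.1, lt_of_le_of_lt hx.2 hθ.2⟩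
      have := constant_of_has_deriv_right_zero (f := E) (a := θ₀) (b := θ)
        (fun x hx => ((hEd x (hsub hx)).continuousAt.continuousWithinAt))
        (fun x hx => (hEd x (hsub ⟨hx.1, hx.2.le⟩)).hasDerivWithinAt)
        θ ⟨hle, le_refl _⟩
      rw [this, hE0]
    · have hsub : Set.Icc θ θ₀ ⊆ Set.Ioo a b := by
        intro x hx; exact ⟨lt_of_lt_of_le hθ.1 hx.1, lt_of_le_of_lt hx.2 hθ₀.2⟩
      have := constant_of_has_deriv_right_zero (f := E) (a := θ) (b := θ₀)
        (fun x hx => ((hEd x (hsub hx)).continuousAt.continuousWithinAt))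
        (fun x hx => (hEd x (hsub ⟨hx.1, hx.2.le⟩)).hasDerivWithinAt)
        θ₀ ⟨hle, le_refl _⟩
      rw [← hE0, this]
  intro θ hθ
  have h := hEz θ hθ
  simp only [hE] at h
  have hn2 : (0:ℝ) < n^2 := pow_pos hn 2
  have ha := sq_nonneg (f' θ - g' θ)
  have hb := sq_nonneg (f θ - g θ)
  have h1 : (f θ - g θ)^2 = 0 := by nlinarith
  have h2 : (f' θ - g' θ)^2 = 0 := by nlinarith
  constructor
  · have := sub_eq_zero.mp (sq_eq_zero_iff.mp h1)
    rw [this]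
  · have := sub_eq_zero.mp (sq_eq_zero_iff.mp h2)
    rw [this]

def IsBump (f f' : ℝ → ℝ) (n α c : ℝ) : Prop :=
  0 ≤ α ∧ α + π/n ≤ π ∧ 0 < c ∧
  (∀ t ∈ Set.Icc α (α+π/n), f t = c * Real.sin (n*(t-α))) ∧
  (∀ t ∈ Set.Ioo α (α+π/n), f' t = c*n*Real.cos (n*(t-α)))

private lemma bump_pos {f f' : ℝ → ℝ} {n α c : ℝ} (hn : 0 < n) (h : IsBump f f' n α c) :
    ∀ t ∈ Set.Ioo α (α+π/n), 0 < f t := by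
  intro t ht
  rw [h.2.2.2.1 t (Set.mem_Icc_of_Ioo ht)]
  have h1 : 0 < n*(t-α) := mul_pos hn (by linarith [ht.1])
  have h2 : n*(t-α) < π := by
    have h3 : t - α < π / n := by linarith [ht.2]
    calc n*(t-α) = (t-α)*n := by ring
    _ < π := (lt_div_iff₀ hn).mp h3
  exact mul_pos h.2.2.1 (Real.sin_pos_of_pos_of_lt_pi h1 h2)

private lemma bump_zero_left {f f' : ℝ → ℝ} {n α c : ℝ} (hn : 0 < n) (h : IsBump f f' n α c) :
    f α = 0 := by
  have := h.2.2.2.1 α ⟨le_refl _, by linarith [div_pos pi_pos hn]⟩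
  simpa using this

private lemma bump_zero_right {f f' : ℝ → ℝ} {n α c : ℝ} (hn : 0 < n) (h : IsBump f f' n α c) :
    f (α + π/n) = 0 := by
  have := h.2.2.2.1 (α + π/n) ⟨by linarith [div_pos pi_pos hn], le_refl _⟩
  rw [this, show n*(α + π/n - α) = π by field_simp; ring]
  simp

private lemma bump_apart {f f' : ℝ → ℝ} {n α α' c c' : ℝ} (hn : 0 < n)
    (h : IsBump f f' n α c) (h' : IsBump f f' n α' c') (hlt : α < α') : α + π/n ≤ α' := by
  by_contra hcon
  push_neg at hcon
  exact absurd (bump_zero_left hn h') (ne_of_gt (bump_pos hn h α' ⟨hlt, hcon⟩))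

private lemma bump_unique {f f' : ℝ → ℝ} {n α α' c c' x : ℝ} (hn : 0 < n)
    (h : IsBump f f' n α c) (h' : IsBump f f' n α' c')
    (h1 : x ≤ α) (h2 : α < x + π/n) (h1' : x ≤ α') (h2' : α' < x + π/n) : α = α' := by
  rcases lt_trichotomy α α' with hlt | heq | hgt
  · have := bump_apart hn h h' hlt; linarith
  · exact heq
  · have := bump_apart hn h' h hgt; linarith

private lemma trig_id1 (A B u v : ℝ) (h : A * Real.cos u + B * Real.sin u = 0) :
    A * Real.cos v + B * Real.sin v = (B * Real.cos u - A * Real.sin u) * Real.sin (v - u) := by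
  have hsc : Real.sin u ^ 2 + Real.cos u ^ 2 = 1 := Real.sin_sq_add_cos_sq u
  rw [Real.sin_sub]
  linear_combination (Real.cos v * Real.cos u + Real.sin v * Real.sin u) * h -
    (A * Real.cos v + B * Real.sin v) * hsc

private lemma trig_id2 (A B u v : ℝ) (h : A * Real.cos u + B * Real.sin u = 0) :
    B * Real.cos v - A * Real.sin v = (B * Real.cos u - A * Real.sin u) * Real.cos (v - u) := by
  have hsc : Real.sin u ^ 2 + Real.cos u ^ 2 = 1 := Real.sin_sq_add_cos_sq u
  rw [Real.cos_sub]
  linear_combination (Real.cos v * Real.sin u - Real.sin v * Real.cos u) * h -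
    (B * Real.cos v - A * Real.sin v) * hsc

private lemma extract_bump (n : ℝ) (hn : 0 < n) (f f' : ℝ → ℝ)
    (hcont : ContinuousOn f (Set.Icc 0 π))
    (hnn : ∀ θ ∈ Set.Icc (0:ℝ) π, 0 ≤ f θ)
    (h0 : f 0 = 0) (hπ : f π = 0)
    (hode : ∀ θ ∈ Set.Ioo (0:ℝ) π, 0 < f θ →
      HasDerivAt f (f' θ) θ ∧ HasDerivAt f' (-(n^2) * f θ) θ)
    {θ : ℝ} (hθ : θ ∈ Set.Ioo 0 π) (hfθ : 0 < f θ) :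
    ∃ α c, IsBump f f' n α c ∧ θ ∈ Set.Ioo α (α + π/n) := by
  have hπn : 0 < π/n := div_pos pi_pos hn
  -- left zero
  set Zl := {t | t ∈ Set.Icc 0 θ ∧ f t = 0} with hZl
  have hZlne : Zl.Nonempty := ⟨0, ⟨le_refl _, hθ.1.le⟩, h0⟩
  have hZlbdd : BddAbove Zl := ⟨θ, fun t ht => ht.1.2⟩
  have hZlcl : IsClosed Zl := by
    have : Zl = Set.Icc 0 θ ∩ f ⁻¹' {0} := by ext t; simp [hZl, Set.mem_inter_iff, and_comm]
    rw [this]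
    exact ContinuousOn.preimage_isClosed_of_isClosed
      (hcont.mono (Set.Icc_subset_Icc le_rfl hθ.2.le)) isClosed_Icc isClosed_singleton
  set α := sSup Zl with hα
  have hαZ : α ∈ Zl := hZlcl.csSup_mem hZlne hZlbdd
  have hfα : f α = 0 := hαZ.2
  have hα0 : 0 ≤ α := hαZ.1.1
  have hαθ : α < θ := lt_of_le_of_ne hαZ.1.2 (fun h => by rw [h] at hfα; linarith)
  have hposL : ∀ t ∈ Set.Ioo α θ, 0 < f t := by
    intro t ht
    rcases lt_or_ge 0 (f t) with h | h
    · exact h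
    · exfalso
      have ht0π : t ∈ Set.Icc 0 π := ⟨by linarith [ht.1], by linarith [ht.2, hθ.2]⟩
      have : f t = 0 := le_antisymm h (hnn t ht0π)
      have : t ∈ Zl := ⟨⟨by linarith [ht.1], ht.2.le⟩, this⟩
      have := le_csSup hZlbdd this
      linarith [ht.1]
  -- right zero
  set Zr := {t | t ∈ Set.Icc θ π ∧ f t = 0} with hZr
  have hZrne : Zr.Nonempty := ⟨π, ⟨hθ.2.le, le_refl _⟩, hπ⟩
  have hZrbdd : BddBelow Zr := ⟨θ, fun t ht => ht.1.1⟩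
  have hZrcl : IsClosed Zr := by
    have : Zr = Set.Icc θ π ∩ f ⁻¹' {0} := by ext t; simp [hZr, Set.mem_inter_iff, and_comm]
    rw [this]
    exact ContinuousOn.preimage_isClosed_of_isClosed
      (hcont.mono (Set.Icc_subset_Icc hθ.1.le le_rfl)) isClosed_Icc isClosed_singleton
  set β := sInf Zr with hβd
  have hβZ : β ∈ Zr := hZrcl.csInf_mem hZrne hZrbdd
  have hfβ : f β = 0 := hβZ.2
  have hβπ : β ≤ π := hβZ.1.2
  have hθβ : θ < β := lt_of_le_of_ne hβZ.1.1 (fun h => by rw [← h] at hfβ; linarith)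
  have hposR : ∀ t ∈ Set.Ioo θ β, 0 < f t := by
    intro t ht
    rcases lt_or_ge 0 (f t) with h | h
    · exact h
    · exfalso
      have ht0π : t ∈ Set.Icc 0 π := ⟨by linarith [ht.1, hθ.1], by linarith [ht.2, hβπ]⟩
      have : f t = 0 := le_antisymm h (hnn t ht0π)
      have : t ∈ Zr := ⟨⟨ht.1.le, by linarith [ht.2, hβπ]⟩, this⟩
      have := csInf_le hZrbdd this
      linarith [ht.2]
  have hαβ : α < β := hαθ.trans hθβ
  have hpos : ∀ t ∈ Set.Ioo α β, 0 < f t := by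
    intro t ht
    rcases lt_trichotomy t θ with h | h | h
    · exact hposL t ⟨ht.1, h⟩
    · rw [h]; exact hfθ
    · exact hposR t ⟨h, ht.2⟩
  have hIoosub : Set.Ioo α β ⊆ Set.Ioo 0 π :=
    fun t ht => ⟨by linarith [ht.1], by linarith [ht.2]⟩
  have hIccsub : Set.Ioo α β ⊆ Set.Icc 0 π :=
    fun t ht => ⟨by linarith [ht.1], by linarith [ht.2]⟩
  have hshape := ode_shape n hn f f' α β
    (fun t ht => hode t (hIoosub ht) (hpos t ht)) θ ⟨hαθ, hθβ⟩
  set A := f θ with hA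
  set B := f' θ / n with hB
  set g : ℝ → ℝ := fun t => A * Real.cos (n*(t-θ)) + B * Real.sin (n*(t-θ)) with hg
  have hgcont : Continuous g := by fun_prop
  have hfg : ∀ t ∈ Set.Ioo α β, f t = g t := fun t ht => (hshape t ht).1
  have hlim : ∀ x, x ∈ Set.Icc 0 π → α ≤ x → x ≤ β → g x = f x := by
    intro x hx01 hxα hxβ
    have hne : (nhdsWithin x (Set.Ioo α β)).NeBot := by
      rw [← mem_closure_iff_nhdsWithin_neBot, closure_Ioo (ne_of_lt hαβ)]
      exact ⟨hxα, hxβ⟩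
    have h1 : Filter.Tendsto f (nhdsWithin x (Set.Ioo α β)) (nhds (f x)) :=
      (hcont x hx01).mono hIccsub
    have h2 : Filter.Tendsto g (nhdsWithin x (Set.Ioo α β)) (nhds (g x)) :=
      (hgcont.tendsto x).mono_left nhdsWithin_le_nhds
    have heq : f =ᶠ[nhdsWithin x (Set.Ioo α β)] g :=
      eventually_nhdsWithin_of_forall hfg
    exact (tendsto_nhds_unique (h1.congr' heq) h2).symm
  have hgα : A * Real.cos (n*(α-θ)) + B * Real.sin (n*(α-θ)) = 0 := by
    have := hlim α ⟨hα0, by linarith⟩ le_rfl hαβ.le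
    rw [hfα] at this; exact this
  set c := B * Real.cos (n*(α-θ)) - A * Real.sin (n*(α-θ)) with hc
  have harg : ∀ t : ℝ, n*(t-θ) - n*(α-θ) = n*(t-α) := fun t => by ring
  have hfs : ∀ t ∈ Set.Ioo α β, f t = c * Real.sin (n*(t-α)) := by
    intro t ht
    rw [hfg t ht]
    have := trig_id1 A B (n*(α-θ)) (n*(t-θ)) hgα
    rw [harg t] at this
    exact this
  have hf's : ∀ t ∈ Set.Ioo α β, f' t = c*n*Real.cos (n*(t-α)) := by
    intro t ht
    rw [(hshape t ht).2]
    have := trig_id2 A B (n*(α-θ)) (n*(t-θ)) hgα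
    rw [harg t] at this
    rw [this]; ring
  -- c positive
  have hcpos : 0 < c := by
    set t₁ := α + min (β-α) (π/n) / 2 with ht₁
    have hmin : 0 < min (β-α) (π/n) := lt_min (by linarith) hπn
    have ht₁m : t₁ ∈ Set.Ioo α β := by
      constructor
      · simp only [ht₁]; linarith
      · have := min_le_left (β-α) (π/n); simp only [ht₁]; linarith
    have hsin : 0 < Real.sin (n*(t₁-α)) := by
      apply Real.sin_pos_of_pos_of_lt_pi
      · have : 0 < t₁ - α := by simp only [ht₁]; linarith
        exact mul_pos hn this
      · have h1 : t₁ - α ≤ (π/n)/2 := by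
          have := min_le_right (β-α) (π/n); simp only [ht₁]; linarith
        have h2 : n * (t₁ - α) ≤ n * ((π/n)/2) := by
          exact mul_le_mul_of_nonneg_left h1 hn.le
        have h3 : n * ((π/n)/2) = π/2 := by field_simp
        rw [h3] at h2
        exact lt_of_le_of_lt h2 (half_lt_self pi_pos)
    have := hpos t₁ ht₁m
    rw [hfs t₁ ht₁m] at this
    by_contra hcon
    push_neg at hcon
    nlinarith
  -- β = α + π/n
  have hβeq : β = α + π/n := by
    rcases lt_trichotomy β (α + π/n) with h | h | h
    · exfalso
      have hgβ : A * Real.cos (n*(β-θ)) + B * Real.sin (n*(β-θ)) = 0 := by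
        have := hlim β ⟨by linarith, hβπ⟩ hαβ.le le_rfl
        rw [hfβ] at this; exact this
      have h2 := trig_id1 A B (n*(α-θ)) (n*(β-θ)) hgα
      rw [harg β] at h2
      rw [hgβ] at h2
      have hsin : 0 < Real.sin (n*(β-α)) := by
        apply Real.sin_pos_of_pos_of_lt_pi (mul_pos hn (by linarith))
        have : β - α < π/n := by linarith
        calc n*(β-α) = (β-α)*n := by ring
        _ < π := (lt_div_iff₀ hn).mp this
      nlinarith
    · exact h
    · exfalso
      have hm : α + π/n ∈ Set.Ioo α β := ⟨by linarith, h⟩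
      have := hpos _ hm
      rw [hfs _ hm, show n*(α + π/n - α) = π by field_simp; ring] at this
      simp at this
  refine ⟨α, c, ⟨hα0, by rw [← hβeq]; exact hβπ, hcpos, ?_, ?_⟩, ?_⟩
  · intro t ht
    rw [← hβeq] at ht
    rcases ht.1.eq_or_lt with h | h
    · rw [← h, hfα, show n*(α-α) = 0 by ring]; simp
    · rcases ht.2.eq_or_lt with h2 | h2
      · rw [h2, hfβ, show n*(β-α) = π by rw [hβeq]; field_simp; ring]
        simp
      · exact hfs t ⟨h, h2⟩
  · intro t ht
    rw [← hβeq] at ht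
    exact hf's t ht
  · rw [← hβeq]; exact ⟨hαθ, hθβ⟩

private lemma bump_tendsto_right {f f' : ℝ → ℝ} {n α c : ℝ} (hn : 0 < n)
    (hb : IsBump f f' n α c) :
    Filter.Tendsto f' (nhdsWithin α (Set.Ioi α)) (nhds (c*n)) := by
  have hπn : 0 < π/n := div_pos pi_pos hn
  have hcont : Filter.Tendsto (fun t => c*n*Real.cos (n*(t-α))) (nhdsWithin α (Set.Ioi α))
      (nhds (c*n*Real.cos (n*(α-α)))) := by
    apply Filter.Tendsto.mono_left _ nhdsWithin_le_nhds
    exact (Continuous.tendsto (by fun_prop) α)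
  rw [show n*(α-α) = 0 by ring, Real.cos_zero, mul_one] at hcont
  apply Filter.Tendsto.congr' _ hcont
  filter_upwards [Ioo_mem_nhdsGT_of_mem (⟨le_rfl, by linarith⟩ : α ∈ Set.Ico α (α+π/n))]
    with t ht
  exact (hb.2.2.2.2 t ht).symm

private lemma bump_tendsto_left {f f' : ℝ → ℝ} {n α c : ℝ} (hn : 0 < n)
    (hb : IsBump f f' n α c) :
    Filter.Tendsto f' (nhdsWithin (α+π/n) (Set.Iio (α+π/n))) (nhds (-(c*n))) := by
  have hπn : 0 < π/n := div_pos pi_pos hn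
  have hcont : Filter.Tendsto (fun t => c*n*Real.cos (n*(t-α))) (nhdsWithin (α+π/n) (Set.Iio (α+π/n)))
      (nhds (c*n*Real.cos (n*(α+π/n-α)))) := by
    apply Filter.Tendsto.mono_left _ nhdsWithin_le_nhds
    exact (Continuous.tendsto (by fun_prop) (α+π/n))
  rw [show n*(α+π/n-α) = π by field_simp; ring, Real.cos_pi, mul_neg_one] at hcont
  apply Filter.Tendsto.congr' _ hcont
  filter_upwards [Ioo_mem_nhdsLT_of_mem (⟨by linarith, le_rfl⟩ : α+π/n ∈ Set.Ioc α (α+π/n))]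
    with t ht
  exact (hb.2.2.2.2 t ht).symm

private lemma abs_sin_add_nat_mul_pi (x : ℝ) (k : ℕ) : |Real.sin (x + k * π)| = |Real.sin x| := by
  induction k with
  | zero => simp
  | succ k ih =>
    push_cast
    rw [show x + ((k:ℝ)+1)*π = (x + (k:ℝ)*π) + π by ring, Real.sin_add_pi, abs_neg]
    exact ih

private lemma integral_sin_sq_nat (N : ℕ) (hN : 0 < N) :
    (∫ t in (0:ℝ)..π, Real.sin ((N:ℝ) * t)^2) = π/2 := by
  have hNne : (N:ℝ) ≠ 0 := Nat.cast_ne_zero.mpr hN.ne'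
  rw [intervalIntegral.integral_comp_mul_left (fun x => Real.sin x ^ 2) hNne]
  rw [integral_sin_sq]
  rw [mul_zero, Real.sin_zero, Real.sin_nat_mul_pi, smul_eq_mul]
  field_simp
  ring

/-- ODE classification of the angular profile: a continuous nonnegative `f` on `[0,π]` with
`f(0)=f(π)=0`, `∫₀^π f² = 1`, satisfying `f'' + N² f = 0` on `{f > 0}` and the reflection
condition `lim_{τ→θ*+} f'(τ) = -lim_{τ→θ*-} f'(τ)` at every interior zero, which is positive
on some subinterval, equals the normalized profile `|sin(Nθ)|/√(∫₀^π sin²(Nθ)dθ)`. -/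
theorem stmt13 (N : ℕ) (hN : 2 ≤ N) (f f' : ℝ → ℝ)
    (hcont : ContinuousOn f (Set.Icc 0 π))
    (hnn : ∀ θ ∈ Set.Icc (0:ℝ) π, 0 ≤ f θ)
    (h0 : f 0 = 0) (hπ : f π = 0)
    (hnorm : ∫ θ in (0:ℝ)..π, (f θ)^2 = 1)
    (hode : ∀ θ ∈ Set.Ioo (0:ℝ) π, 0 < f θ →
      HasDerivAt f (f' θ) θ ∧ HasDerivAt f' (-(N^2 : ℝ) * f θ) θ)
    (hrefl : ∀ θ ∈ Set.Ioo (0:ℝ) π, f θ = 0 → ∃ L : ℝ,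
      Filter.Tendsto f' (nhdsWithin θ (Set.Ioi θ)) (nhds L) ∧
      Filter.Tendsto f' (nhdsWithin θ (Set.Iio θ)) (nhds (-L)))
    (hsub : ∃ a b : ℝ, 0 ≤ a ∧ a < b ∧ b ≤ π ∧ ∀ θ ∈ Set.Ioo a b, 0 < f θ) :
    ∀ θ ∈ Set.Icc (0:ℝ) π,
      f θ = |Real.sin (N * θ)| / Real.sqrt (∫ t in (0:ℝ)..π, (Real.sin (N * t))^2) := by
  have hn : (0:ℝ) < (N:ℝ) := Nat.cast_pos.mpr (by omega)
  have hπn : 0 < π/(N:ℝ) := div_pos pi_pos hn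
  have hode' : ∀ θ ∈ Set.Ioo (0:ℝ) π, 0 < f θ →
      HasDerivAt f (f' θ) θ ∧ HasDerivAt f' (-((N:ℝ)^2) * f θ) θ := by
    intro θ hθ hf
    refine ⟨(hode θ hθ hf).1, ?_⟩
    have := (hode θ hθ hf).2
    convert this using 2 <;> push_cast <;> ring
  have hex : ∀ t ∈ Set.Ioo (0:ℝ) π, 0 < f t →
      ∃ α c, IsBump f f' (N:ℝ) α c ∧ t ∈ Set.Ioo α (α + π/(N:ℝ)) :=
    fun t ht hf => extract_bump (N:ℝ) hn f f' hcont hnn h0 hπ hode' ht hf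
  have hstepR : ∀ α c, IsBump f f' (N:ℝ) α c → α + π/(N:ℝ) < π →
      IsBump f f' (N:ℝ) (α + π/(N:ℝ)) c := by
    intro α c hb hlt0
    have hα0 : 0 ≤ α := hb.1
    have hcpos : 0 < c := hb.2.2.1
    obtain ⟨β, hβdef⟩ : ∃ β : ℝ, β = α + π/(N:ℝ) := ⟨_, rfl⟩
    rw [← hβdef]
    have hlt : β < π := by rw [hβdef]; exact hlt0
    have hβ0 : 0 < β := by rw [hβdef]; linarith
    have hfβ0 : f β = 0 := by rw [hβdef]; exact bump_zero_right hn hb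
    have hLlim : Filter.Tendsto f' (nhdsWithin β (Set.Iio β)) (nhds (-(c*(N:ℝ)))) := by
      rw [hβdef]; exact bump_tendsto_left hn hb
    obtain ⟨L, hLr, hLl⟩ := hrefl β ⟨hβ0, hlt⟩ hfβ0
    have hLval : L = c*(N:ℝ) := by
      have h := tendsto_nhds_unique hLl hLlim
      linarith
    rw [hLval] at hLr
    have hcn : 0 < c*(N:ℝ) := mul_pos hcpos hn
    have hev := hLr.eventually (eventually_gt_nhds (show c*(N:ℝ)/2 < c*(N:ℝ) by linarith))
    rw [Filter.eventually_iff, mem_nhdsGT_iff_exists_Ioo_subset] at hev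
    obtain ⟨u, hu, hsubu⟩ := hev
    obtain ⟨u₁, hu₁def⟩ : ∃ u₁ : ℝ, u₁ = min u (min π (β + π/(N:ℝ))) := ⟨_, rfl⟩
    have hu₁u : u₁ ≤ u := by rw [hu₁def]; exact min_le_left _ _
    have hu₁π : u₁ ≤ π := by rw [hu₁def]; exact le_trans (min_le_right _ _) (min_le_left _ _)
    have hu₁β : u₁ ≤ β + π/(N:ℝ) := by
      rw [hu₁def]; exact le_trans (min_le_right _ _) (min_le_right _ _)
    have hβu₁ : β < u₁ := by rw [hu₁def]; exact lt_min hu (lt_min hlt (by linarith))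
    have hfind : ∀ v, β < v → v ≤ u₁ → ∃ t ∈ Set.Ioo β v, 0 < f t := by
      intro v hv1 hv2
      by_contra hcon
      push_neg at hcon
      have hz : ∀ t ∈ Set.Ioo β v, f t = 0 := fun t ht =>
        le_antisymm (hcon t ht) (hnn t ⟨by linarith [ht.1], by linarith [ht.2]⟩)
      have hτ : (β+v)/2 ∈ Set.Ioo β v := ⟨by linarith, by linarith⟩
      obtain ⟨L', hL'r, hL'l⟩ := hrefl ((β+v)/2) ⟨by linarith, by linarith⟩ (hz _ hτ)
      have h1 : c*(N:ℝ)/2 ≤ L' := by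
        apply ge_of_tendsto hL'r
        filter_upwards [Ioo_mem_nhdsGT_of_mem
          (⟨le_rfl, hτ.2⟩ : (β+v)/2 ∈ Set.Ico ((β+v)/2) v)] with t ht
        exact (hsubu ⟨by linarith [ht.1, hτ.1], by linarith [ht.2]⟩).le
      have h2 : c*(N:ℝ)/2 ≤ -L' := by
        apply ge_of_tendsto hL'l
        filter_upwards [Ioo_mem_nhdsLT_of_mem
          (⟨hτ.1, le_rfl⟩ : (β+v)/2 ∈ Set.Ioc β ((β+v)/2))] with t ht
        exact (hsubu ⟨ht.1, by linarith [ht.2, hτ.2]⟩).le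
      linarith
    obtain ⟨t₁, ht₁, hft₁⟩ := hfind u₁ hβu₁ le_rfl
    obtain ⟨α₁, c₁, hb₁, ht₁m⟩ := hex t₁ ⟨by linarith [ht₁.1], by linarith [ht₁.2]⟩ hft₁
    have hα₁β : β ≤ α₁ := by
      by_contra hcon2
      push_neg at hcon2
      exact absurd hfβ0
        (ne_of_gt (bump_pos hn hb₁ β ⟨hcon2, by linarith [ht₁m.2, ht₁.1]⟩))
    have hα₁eq : α₁ = β := by
      by_contra hcon2
      have hβα₁ : β < α₁ := lt_of_le_of_ne hα₁β (Ne.symm hcon2)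
      obtain ⟨t₂, ht₂, hft₂⟩ := hfind α₁ hβα₁ (by linarith [ht₁m.1, ht₁.2])
      obtain ⟨α₂, c₂, hb₂, ht₂m⟩ := hex t₂
        ⟨by linarith [ht₂.1], by linarith [ht₂.2, ht₁m.1, ht₁.2]⟩ hft₂
      have hα₂β : β ≤ α₂ := by
        by_contra hc2
        push_neg at hc2
        exact absurd hfβ0
          (ne_of_gt (bump_pos hn hb₂ β ⟨hc2, by linarith [ht₂m.2, ht₂.1]⟩))
      have heq := bump_unique hn hb₁ hb₂ hα₁β
        (by linarith [ht₁m.1, ht₁.2]) hα₂β (by linarith [ht₂m.1, ht₂.2, ht₁m.1, ht₁.2])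
      linarith [ht₂m.1, ht₂.2]
    have hc₁ : c₁ = c := by
      have hRlim := bump_tendsto_right hn hb₁
      rw [hα₁eq] at hRlim
      have h := tendsto_nhds_unique hRlim hLr
      exact mul_right_cancel₀ hn.ne' h
    rw [hα₁eq, hc₁] at hb₁
    exact hb₁
  have hstepL : ∀ α c, IsBump f f' (N:ℝ) α c → 0 < α →
      ∃ c', IsBump f f' (N:ℝ) (α - π/(N:ℝ)) c' := by
    intro α c hb hα0
    have hcpos : 0 < c := hb.2.2.1
    have hαπ : α < π := by linarith [hb.2.1, hπn]
    have hfα0 : f α = 0 := bump_zero_left hn hb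
    have hRlim := bump_tendsto_right hn hb
    obtain ⟨L, hLr, hLl⟩ := hrefl α ⟨hα0, hαπ⟩ hfα0
    have hLval : L = c*(N:ℝ) := tendsto_nhds_unique hLr hRlim
    rw [hLval] at hLl
    have hcn : 0 < c*(N:ℝ) := mul_pos hcpos hn
    have hev := hLl.eventually (eventually_lt_nhds (show -(c*(N:ℝ)) < -(c*(N:ℝ)/2) by linarith))
    rw [Filter.eventually_iff, mem_nhdsLT_iff_exists_Ioo_subset] at hev
    obtain ⟨l, hl, hsubl⟩ := hev
    obtain ⟨l₁, hl₁def⟩ : ∃ l₁ : ℝ, l₁ = max l (max 0 (α - π/(N:ℝ))) := ⟨_, rfl⟩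
    have hl₁l : l ≤ l₁ := by rw [hl₁def]; exact le_max_left _ _
    have hl₁0 : 0 ≤ l₁ := by rw [hl₁def]; exact le_trans (le_max_left _ _) (le_max_right _ _)
    have hl₁α' : α - π/(N:ℝ) ≤ l₁ := by
      rw [hl₁def]; exact le_trans (le_max_right _ _) (le_max_right _ _)
    have hl₁α : l₁ < α := by rw [hl₁def]; exact max_lt hl (max_lt hα0 (by linarith))
    have hfind : ∀ v, l₁ ≤ v → v < α → ∃ t ∈ Set.Ioo v α, 0 < f t := by
      intro v hv1 hv2
      by_contra hcon
      push_neg at hcon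
      have hz : ∀ t ∈ Set.Ioo v α, f t = 0 := fun t ht =>
        le_antisymm (hcon t ht) (hnn t ⟨by linarith [ht.1], by linarith [ht.2]⟩)
      have hτ : (v+α)/2 ∈ Set.Ioo v α := ⟨by linarith, by linarith⟩
      obtain ⟨L', hL'r, hL'l⟩ := hrefl ((v+α)/2) ⟨by linarith, by linarith⟩ (hz _ hτ)
      have h1 : L' ≤ -(c*(N:ℝ)/2) := by
        apply le_of_tendsto hL'r
        filter_upwards [Ioo_mem_nhdsGT_of_mem
          (⟨le_rfl, hτ.2⟩ : (v+α)/2 ∈ Set.Ico ((v+α)/2) α)] with t ht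
        exact (hsubl ⟨by linarith [ht.1, hτ.1], ht.2⟩).le
      have h2 : -L' ≤ -(c*(N:ℝ)/2) := by
        apply le_of_tendsto hL'l
        filter_upwards [Ioo_mem_nhdsLT_of_mem
          (⟨hτ.1, le_rfl⟩ : (v+α)/2 ∈ Set.Ioc v ((v+α)/2))] with t ht
        exact (hsubl ⟨by linarith [ht.1], by linarith [ht.2, hτ.2]⟩).le
      linarith
    obtain ⟨t₁, ht₁, hft₁⟩ := hfind l₁ le_rfl hl₁α
    obtain ⟨α₁, c₁, hb₁, ht₁m⟩ := hex t₁ ⟨by linarith [ht₁.1], by linarith [ht₁.2]⟩ hft₁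
    have hβ₁α : α₁ + π/(N:ℝ) ≤ α := by
      by_contra hcon2
      push_neg at hcon2
      exact absurd hfα0
        (ne_of_gt (bump_pos hn hb₁ α ⟨by linarith [ht₁m.1, ht₁.2], hcon2⟩))
    have hβ₁eq : α₁ + π/(N:ℝ) = α := by
      by_contra hcon2
      have hβ₁ : α₁ + π/(N:ℝ) < α := lt_of_le_of_ne hβ₁α hcon2
      obtain ⟨t₂, ht₂, hft₂⟩ := hfind (α₁ + π/(N:ℝ)) (by linarith [ht₁m.2, ht₁.1]) hβ₁
      obtain ⟨α₂, c₂, hb₂, ht₂m⟩ := hex t₂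
        ⟨by linarith [ht₂.1, ht₁m.2, ht₁.1], by linarith [ht₂.2]⟩ hft₂
      have hβ₂α : α₂ + π/(N:ℝ) ≤ α := by
        by_contra hc2
        push_neg at hc2
        exact absurd hfα0
          (ne_of_gt (bump_pos hn hb₂ α ⟨by linarith [ht₂m.1, ht₂.2], hc2⟩))
      have hord : α₁ < α₂ := by linarith [ht₂m.2, ht₂.1]
      have := bump_apart hn hb₁ hb₂ hord
      linarith [ht₁m.2, ht₁.1]
    refine ⟨c₁, ?_⟩
    have heq : α₁ = α - π/(N:ℝ) := by linarith [hβ₁eq]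
    rw [← heq]
    exact hb₁
  -- base bump at 0
  obtain ⟨c₀, hb₀⟩ : ∃ c₀, IsBump f f' (N:ℝ) 0 c₀ := by
    obtain ⟨a, b, ha, hab, hb, hsubpos⟩ := hsub
    have hmid : (a+b)/2 ∈ Set.Ioo 0 π := ⟨by linarith, by linarith [pi_pos]⟩
    obtain ⟨α₀, c₀, hb₀, _⟩ := hex _ hmid (hsubpos _ ⟨by linarith, by linarith⟩)
    have hdes : ∀ k : ℕ, ∀ α c, IsBump f f' (N:ℝ) α c → α ≤ k * (π/(N:ℝ)) →
        ∃ c', IsBump f f' (N:ℝ) 0 c' := by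
      intro k
      induction k with
      | zero =>
        intro α c hbc hle
        have hα0 : α = 0 := le_antisymm (by simpa using hle) hbc.1
        exact ⟨c, by rw [← hα0]; exact hbc⟩
      | succ k ih =>
        intro α c hbc hle
        rcases eq_or_lt_of_le hbc.1 with h | h
        · exact ⟨c, by rw [h]; exact hbc⟩
        · obtain ⟨c', hb'⟩ := hstepL α c hbc h
          apply ih _ _ hb'
          push_cast at hle ⊢
          linarith
    apply hdes N α₀ c₀ hb₀
    rw [mul_div_cancel₀ _ hn.ne']
    linarith [hb₀.2.1, hπn]
  -- tiling
  have htile : ∀ k : ℕ, k < N → IsBump f f' (N:ℝ) ((k:ℝ)*(π/(N:ℝ))) c₀ := by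
    intro k
    induction k with
    | zero => intro _; simpa using hb₀
    | succ k ih =>
      intro hk
      have hbk := ih (by omega)
      have hcast : ((k:ℝ)+1) < (N:ℝ) := by exact_mod_cast hk
      have hlt : (k:ℝ)*(π/(N:ℝ)) + π/(N:ℝ) < π := by
        have h1 : (k:ℝ)*(π/(N:ℝ)) + π/(N:ℝ) = ((k:ℝ)+1)*(π/(N:ℝ)) := by ring
        have h2 : ((k:ℝ)+1)*(π/(N:ℝ)) < (N:ℝ) * (π/(N:ℝ)) :=
          mul_lt_mul_of_pos_right hcast hπn
        rw [h1, mul_div_cancel₀ _ hn.ne'] at *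
        linarith
      have hstep := hstepR _ _ hbk hlt
      have h3 : ((k+1:ℕ):ℝ)*(π/(N:ℝ)) = (k:ℝ)*(π/(N:ℝ)) + π/(N:ℝ) := by push_cast; ring
      rw [h3]
      exact hstep
  -- integral value
  have hIval : (∫ t in (0:ℝ)..π, Real.sin ((N:ℝ) * t)^2) = π/2 :=
    integral_sin_sq_nat N (by omega)
  -- f in closed form
  have habs : ∀ θ ∈ Set.Icc (0:ℝ) π, f θ = c₀ * |Real.sin ((N:ℝ)*θ)| := by
    intro θ hθ
    rcases eq_or_lt_of_le hθ.2 with hpi | hpi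
    · rw [hpi, hπ, Real.sin_nat_mul_pi]; simp
    · set k := ⌊θ * (N:ℝ) / π⌋₊ with hk
      have hθN : 0 ≤ θ * (N:ℝ) / π := div_nonneg (mul_nonneg hθ.1 hn.le) pi_pos.le
      have hk1 : (k:ℝ) ≤ θ * (N:ℝ) / π := Nat.floor_le hθN
      have hk2 : θ * (N:ℝ) / π < (k:ℝ) + 1 := Nat.lt_floor_add_one _
      have hkN : k < N := by
        apply (Nat.floor_lt hθN).mpr
        rw [div_lt_iff₀ pi_pos]
        calc θ * (N:ℝ) < π * (N:ℝ) := by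
              apply mul_lt_mul_of_pos_right hpi hn
        _ = (N:ℝ) * π := by ring
      have hbk := htile k hkN
      have hmem : θ ∈ Set.Icc ((k:ℝ)*(π/(N:ℝ))) ((k:ℝ)*(π/(N:ℝ)) + π/(N:ℝ)) := by
        have hl := (le_div_iff₀ pi_pos).mp hk1
        have hr := (div_lt_iff₀ pi_pos).mp hk2
        constructor
        · rw [show (k:ℝ)*(π/(N:ℝ)) = (k:ℝ)*π/(N:ℝ) by ring, div_le_iff₀ hn]
          linarith
        · rw [show (k:ℝ)*(π/(N:ℝ)) + π/(N:ℝ) = ((k:ℝ)+1)*π/(N:ℝ) by ring, le_div_iff₀ hn]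
          linarith
      have hval := hbk.2.2.2.1 θ hmem
      rw [hval]
      congr 1
      have hnonneg : 0 ≤ Real.sin ((N:ℝ)*(θ - (k:ℝ)*(π/(N:ℝ)))) := by
        apply Real.sin_nonneg_of_nonneg_of_le_pi
        · have := hmem.1
          nlinarith
        · have h2 := hmem.2
          have : (N:ℝ)*(θ - (k:ℝ)*(π/(N:ℝ))) ≤ (N:ℝ)*(π/(N:ℝ)) := by nlinarith
          rw [mul_div_cancel₀ _ hn.ne'] at this
          exact this
      have hrw : |Real.sin ((N:ℝ)*θ)| = Real.sin ((N:ℝ)*(θ - (k:ℝ)*(π/(N:ℝ)))) := by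
        rw [show (N:ℝ)*θ = ((N:ℝ)*(θ - (k:ℝ)*(π/(N:ℝ)))) + (k:ℝ)*π by field_simp; ring]
        rw [abs_sin_add_nat_mul_pi]
        exact abs_of_nonneg hnonneg
      rw [hrw]
  -- normalization
  have hnorm2 : c₀^2 * (π/2) = 1 := by
    have hcg : (∫ θ in (0:ℝ)..π, (f θ)^2)
        = ∫ θ in (0:ℝ)..π, c₀^2 * (Real.sin ((N:ℝ)*θ))^2 := by
      apply intervalIntegral.integral_congr
      intro t ht
      rw [Set.uIcc_of_le pi_pos.le] at ht
      show f t ^ 2 = c₀^2 * (Real.sin ((N:ℝ)*t))^2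
      rw [habs t ht, mul_pow, sq_abs]
    rw [hcg, intervalIntegral.integral_const_mul, hIval] at hnorm
    exact hnorm
  intro θ hθ
  rw [habs θ hθ, hIval]
  have hs : (0:ℝ) < Real.sqrt (π/2) := Real.sqrt_pos.mpr (by positivity)
  have hc₀pos : 0 < c₀ := hb₀.2.2.1
  have hkey : c₀ * Real.sqrt (π/2) = 1 := by
    have h2 : (c₀ * Real.sqrt (π/2))^2 = 1 := by
      rw [mul_pow, Real.sq_sqrt (by positivity : (0:ℝ) ≤ π/2)]
      exact hnorm2
    nlinarith [mul_pos hc₀pos hs]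
  rw [eq_div_iff hs.ne']
  linear_combination |Real.sin ((N:ℝ)*θ)| * hkey
end
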